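/- Let ρ be a congruence on an E-unitary inverse semigroup S, and define ρ_min as above. Then the canonical map τ : S → S/ρ_min is idempotent pure: if s ∈ S and s ρ_min x for some idempotent x, then s is an idempotent. -/
import Mathlib


class InverseSemigroup (S : Type*) extends Semigroup S, Inv S where
  mul_inv_mul : ∀ a : S, a * a⁻¹ * a = a
  inv_mul_inv : ∀ a : S, a⁻¹ * a * a⁻¹ = a⁻¹
  idem_comm : ∀ e f : S, e * e = e → f * f = f → e * f = f * e

/-- The natural partial order: `a ≤ b` iff `a = e * b` for some idempotent `e`. -/
def natLe {S : Type*} [InverseSemigroup S] (a b : S) : Prop :=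
  ∃ e : S, e * e = e ∧ a = e * b

/-- `a ρ_min b` iff there is an idempotent `e` with `a*e = b*e`, `a⁻¹a ρ e` and `b⁻¹b ρ e`. -/
def rhoMin {S : Type*} [InverseSemigroup S] (ρ : Con S) (a b : S) : Prop :=
  ∃ e : S, e * e = e ∧ a * e = b * e ∧ ρ (a⁻¹ * a) e ∧ ρ (b⁻¹ * b) e

lemma inv_mul_idem {S : Type*} [InverseSemigroup S] (s : S) :
    (s⁻¹ * s) * (s⁻¹ * s) = s⁻¹ * s := by
  calc (s⁻¹ * s) * (s⁻¹ * s) = (s⁻¹ * s * s⁻¹) * s := by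
        simp only [mul_assoc]
    _ = s⁻¹ * s := by rw [InverseSemigroup.inv_mul_inv]

/-- if `S` is `E`-unitary (idempotents below an element force it to be
idempotent), then the canonical map `τ : S → S/ρ_min` is idempotent pure: if
`s ρ_min x` with `x` idempotent, then `s` is idempotent. -/
theorem stmt2 {S : Type*} [InverseSemigroup S] (ρ : Con S)
    (hEunitary : ∀ e s : S, e * e = e → natLe e s → s * s = s) :
    ∀ s x : S, x * x = x → rhoMin ρ s x → s * s = s := by
  rintro s x hx ⟨e, he, hse, -, -⟩
  -- x*e is idempotent
  have hcomm : x * e = e * x := InverseSemigroup.idem_comm x e hx he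
  have hxe : (x * e) * (x * e) = x * e := by
    calc (x * e) * (x * e) = x * (e * x) * e := by simp only [mul_assoc]
      _ = x * (x * e) * e := by rw [← hcomm]
      _ = (x * x) * (e * e) := by simp only [mul_assoc]
      _ = x * e := by rw [hx, he]
  have hse_idem : (s * e) * (s * e) = s * e := by rw [hse]; exact hxe
  -- f := s * e * s⁻¹ is idempotent, and s*e = f * s
  have hinv : (s⁻¹ * s) * e = e * (s⁻¹ * s) :=
    InverseSemigroup.idem_comm _ e (inv_mul_idem s) he
  have key : s * e * s⁻¹ * s = s * e := by
    calc s * e * s⁻¹ * s = s * (e * (s⁻¹ * s)) := by simp only [mul_assoc]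
      _ = s * ((s⁻¹ * s) * e) := by rw [hinv]
      _ = (s * s⁻¹ * s) * e := by simp only [mul_assoc]
      _ = s * e := by rw [InverseSemigroup.mul_inv_mul]
  have hf : (s * e * s⁻¹) * (s * e * s⁻¹) = s * e * s⁻¹ := by
    calc (s * e * s⁻¹) * (s * e * s⁻¹) = (s * e * s⁻¹ * s) * (e * s⁻¹) := by
          simp only [mul_assoc]
      _ = (s * e) * (e * s⁻¹) := by rw [key]
      _ = s * (e * e) * s⁻¹ := by simp only [mul_assoc]
      _ = s * e * s⁻¹ := by rw [he]
  exact hEunitary (s * e) s hse_idem ⟨s * e * s⁻¹, hf, key.symm⟩
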